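/- A function g: ℝ^Θ → (−∞,∞] is the Fenchel conjugate of some f: ℝ₊^Θ → [0,∞] that is convex, lower semicontinuous, and satisfies f(1,…,1)=0 if and only if g is convex, lower semicontinuous, monotone (x ≤ y pointwise implies g(x) ≤ g(y)), g(0)=0, and the all-ones vector 1 lies in the subdifferential of g at 0. -/

import Mathlib

open scoped ENNReal BigOperators

/-- Convexity of an `[0,∞]`-valued function on the nonnegative orthant. -/
def ConvexOnNonneg {n : Type*} (f : (n → ℝ) → ℝ≥0∞) : Prop :=
  ∀ x y : n → ℝ, (∀ i, 0 ≤ x i) → (∀ i, 0 ≤ y i) →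
    ∀ a b : ℝ, 0 ≤ a → 0 ≤ b → a + b = 1 →
      f (fun i => a * x i + b * y i) ≤ ENNReal.ofReal a * f x + ENNReal.ofReal b * f y

/-- Convexity of an extended-real-valued function on a real vector space. -/
def ConvexFnEReal {E : Type*} [AddCommMonoid E] [SMul ℝ E] (g : E → EReal) : Prop :=
  ∀ x y : E, ∀ a b : ℝ, 0 ≤ a → 0 ≤ b → a + b = 1 →
    g (a • x + b • y) ≤ (a : EReal) * g x + (b : EReal) * g y

/-- The Fenchel conjugate over the nonnegative orthant of an `[0,∞]`-valued function. -/
noncomputable def conjOrthant {Θ : Type*} [Fintype Θ] (f : (Θ → ℝ) → ℝ≥0∞)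
    (x : Θ → ℝ) : EReal :=
  ⨆ y : {y : Θ → ℝ // ∀ θ, 0 ≤ y θ},
    ((∑ θ, x θ * y.1 θ : ℝ) : EReal) - (f y.1 : EReal)

private lemma ereal_le_of_forall_real_lt {y x : EReal}
    (h : ∀ r : ℝ, (r : EReal) < y → (r : EReal) ≤ x) : y ≤ x := by
  refine le_of_forall_lt_imp_le_of_dense fun a ha => ?_
  induction a with
  | bot => exact bot_le
  | coe r => exact h r ha
  | top => exact absurd ha not_top_lt

private lemma ereal_comb_le (a b r r' : ℝ) (hab : a + b = 1)
    (c : EReal) (hc : c ≠ ⊥) :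
    ((a * r + b * r' : ℝ) : EReal) - c
      ≤ (a : EReal) * ((r : EReal) - c) + (b : EReal) * ((r' : EReal) - c) := by
  induction c with
  | bot => exact absurd rfl hc
  | coe d =>
      rw [← EReal.coe_sub, ← EReal.coe_sub, ← EReal.coe_sub, ← EReal.coe_mul, ← EReal.coe_mul,
        ← EReal.coe_add]
      exact EReal.coe_le_coe_iff.2 (le_of_eq (by linear_combination d * hab))
  | top => rw [EReal.sub_top]; exact bot_le

private lemma ereal_sub_sub_le (r : ℝ) (c : EReal) (hc : c ≠ ⊥) :
    (r : EReal) - ((r : EReal) - c) ≤ c := by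
  induction c with
  | bot => exact absurd rfl hc
  | coe d =>
      rw [← EReal.coe_sub, ← EReal.coe_sub]
      exact EReal.coe_le_coe_iff.2 (by ring_nf; exact le_rfl)
  | top => exact le_top

private lemma ereal_sub_nonpos {x y : EReal} (h : x ≤ y) : x - y ≤ 0 := by
  rw [sub_eq_add_neg]
  calc x + (-y) ≤ y + (-y) := add_le_add_left h _
    _ ≤ 0 := by
      induction y with
      | bot => simp
      | coe d => rw [← EReal.coe_neg, ← EReal.coe_add]; simp
      | top => simp

private lemma lsc_affine_sub {Θ : Type*} [Fintype Θ] (w : Θ → ℝ) (c : EReal) :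
    LowerSemicontinuous (fun v : Θ → ℝ => ((∑ θ, v θ * w θ : ℝ) : EReal) - c) := by
  induction c with
  | bot =>
      have : (fun v : Θ → ℝ => ((∑ θ, v θ * w θ : ℝ) : EReal) - ⊥) = fun _ => ⊤ := by
        funext v; rw [EReal.coe_sub_bot]
      rw [this]; exact lowerSemicontinuous_const
  | coe d =>
      have : (fun v : Θ → ℝ => ((∑ θ, v θ * w θ : ℝ) : EReal) - (d : EReal))
          = fun v => (((∑ θ, v θ * w θ) - d : ℝ) : EReal) := by
        funext v; rw [EReal.coe_sub]
      rw [this]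
      apply Continuous.lowerSemicontinuous
      refine continuous_coe_real_ereal.comp ?_
      exact (continuous_finset_sum _ fun θ _ => (continuous_apply θ).mul continuous_const).sub
        continuous_const
  | top =>
      have : (fun v : Θ → ℝ => ((∑ θ, v θ * w θ : ℝ) : EReal) - ⊤) = fun _ => ⊥ := by
        funext v; rw [EReal.sub_top]
      rw [this]; exact lowerSemicontinuous_const

private noncomputable def erealToENN (x : EReal) : ℝ≥0∞ :=
  if x = ⊤ then ⊤ else ENNReal.ofReal x.toReal

private lemma coe_erealToENN {x : EReal} (hx : 0 ≤ x) : ((erealToENN x : ℝ≥0∞) : EReal) = x := by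
  unfold erealToENN
  split_ifs with h
  · simp [h]
  · have hb : x ≠ ⊥ := fun hbot => by simp [hbot] at hx
    rw [EReal.coe_ennreal_ofReal,
      max_eq_left (by simpa using EReal.toReal_le_toReal hx (by simp) h), EReal.coe_toReal h hb]

/-- The (restricted-to-be-used-on-the-orthant) conjugate of `g`. -/
private noncomputable def Fconj {Θ : Type*} [Fintype Θ] (g : (Θ → ℝ) → EReal)
    (y : Θ → ℝ) : EReal :=
  ⨆ x : Θ → ℝ, ((∑ θ, y θ * x θ : ℝ) : EReal) - g x

section Backward

variable {Θ : Type*} [Fintype Θ] {g : (Θ → ℝ) → EReal}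

private lemma Fconj_nonneg (h0 : g 0 = 0) (y : Θ → ℝ) : 0 ≤ Fconj g y := by
  refine le_iSup_of_le 0 ?_
  simp [h0]

private lemma Fconj_nonneg_of_ne_top (hmono : Monotone g) (h0 : g 0 = 0) {z : Θ → ℝ}
    (hz : Fconj g z ≠ ⊤) : ∀ θ, 0 ≤ z θ := by
  by_contra hcon
  push_neg at hcon
  obtain ⟨θ0, hθ0⟩ := hcon
  apply hz
  rw [EReal.eq_top_iff_forall_lt]
  intro s
  haveI := Classical.decEq Θ
  set t : ℝ := (|s| + 1) / (-z θ0) with ht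
  have hzpos : 0 < -z θ0 := neg_pos.2 hθ0
  have htpos : 0 < t := div_pos (by positivity) hzpos
  set w : Θ → ℝ := fun θ' => if θ' = θ0 then -t else 0 with hw
  have hw0 : w ≤ 0 := by
    intro θ'
    by_cases h : θ' = θ0 <;> simp [hw, h] <;> linarith
  have hgw : g w ≤ 0 := h0 ▸ hmono hw0
  have hsum : ∑ θ, z θ * w θ = |s| + 1 := by
    rw [Finset.sum_eq_single θ0 (fun θ hθ hne => by simp [hw, hne]) (by simp)]
    simp only [hw, if_pos rfl, ht]
    field_simp
    ring_nf
    exact mul_inv_cancel₀ hθ0.ne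
  have step1 : (s : EReal) < ((∑ θ, z θ * w θ : ℝ) : EReal) := by
    rw [hsum]
    exact EReal.coe_lt_coe_iff.2 (by cases abs_cases s <;> linarith)
  have step2 : ((∑ θ, z θ * w θ : ℝ) : EReal) ≤ ((∑ θ, z θ * w θ : ℝ) : EReal) - g w := by
    have := EReal.sub_le_sub (le_refl ((∑ θ, z θ * w θ : ℝ) : EReal)) hgw
    simpa using this
  exact lt_of_lt_of_le (lt_of_lt_of_le step1 step2)
    (le_iSup (fun x : Θ → ℝ => ((∑ θ, z θ * x θ : ℝ) : EReal) - g x) w)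

private lemma Fconj_lsc : LowerSemicontinuous (Fconj g) :=
  lowerSemicontinuous_iSup fun x => lsc_affine_sub x (g x)

private lemma g_ne_bot (hge : ∀ x, ((∑ θ, x θ : ℝ) : EReal) ≤ g x) (w : Θ → ℝ) :
    g w ≠ ⊥ := fun h => by
  have := hge w
  rw [h, le_bot_iff] at this
  exact EReal.coe_ne_bot _ this

private lemma epi_convex (hconv : ConvexFnEReal g) :
    Convex ℝ {p : (Θ → ℝ) × ℝ | g p.1 ≤ (p.2 : EReal)} := by
  intro p hp q hq a b ha hb hab
  simp only [Set.mem_setOf_eq] at hp hq ⊢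
  have h1 := hconv p.1 q.1 a b ha hb hab
  refine le_trans h1 ?_
  have h2 : ((a • p + b • q).2 : EReal) = (a : EReal) * (p.2 : EReal) + (b : EReal) * (q.2 : EReal) := by
    show (((a * p.2 + b * q.2 : ℝ)) : EReal) = _
    rw [EReal.coe_add, EReal.coe_mul, EReal.coe_mul]
  rw [h2]
  exact add_le_add (mul_le_mul_of_nonneg_left hp (by exact_mod_cast ha))
    (mul_le_mul_of_nonneg_left hq (by exact_mod_cast hb))

private lemma epi_closed (hlsc : LowerSemicontinuous g) :
    IsClosed {p : (Θ → ℝ) × ℝ | g p.1 ≤ (p.2 : EReal)} := by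
  rw [← isOpen_compl_iff, isOpen_iff_eventually]
  intro p hp
  have hlt : ((p.2 : ℝ) : EReal) < g p.1 := not_le.1 hp
  obtain ⟨t, ht1, ht2⟩ := EReal.lt_iff_exists_real_btwn.1 hlt
  have h1 : ∀ᶠ q : (Θ → ℝ) × ℝ in nhds p, (t : EReal) < g q.1 :=
    (continuous_fst.tendsto p).eventually (hlsc p.1 (t : EReal) ht2)
  have h2 : ∀ᶠ q : (Θ → ℝ) × ℝ in nhds p, q.2 < t := by
    have hopen : IsOpen {q : (Θ → ℝ) × ℝ | q.2 < t} := isOpen_lt continuous_snd continuous_const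
    exact hopen.eventually_mem (EReal.coe_lt_coe_iff.1 ht1)
  filter_upwards [h1, h2] with q hq1 hq2
  simp only [Set.mem_compl_iff, Set.mem_setOf_eq, not_le]
  exact lt_trans (EReal.coe_lt_coe_iff.2 hq2) hq1

private lemma conj_le (h0 : g 0 = 0) (hge : ∀ x, ((∑ θ, x θ : ℝ) : EReal) ≤ g x) (x : Θ → ℝ) :
    conjOrthant (fun y => erealToENN (Fconj g y)) x ≤ g x := by
  refine iSup_le fun y => ?_
  show ((∑ θ, x θ * y.1 θ : ℝ) : EReal) - ((erealToENN (Fconj g y.1) : ℝ≥0∞) : EReal) ≤ g x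
  rw [coe_erealToENN (Fconj_nonneg h0 y.1)]
  have h1 : ((∑ θ, y.1 θ * x θ : ℝ) : EReal) - g x ≤ Fconj g y.1 :=
    le_iSup (fun w : Θ → ℝ => ((∑ θ, y.1 θ * w θ : ℝ) : EReal) - g w) x
  have h2 : (∑ θ, x θ * y.1 θ : ℝ) = ∑ θ, y.1 θ * x θ :=
    Finset.sum_congr rfl fun θ _ => mul_comm _ _
  calc ((∑ θ, x θ * y.1 θ : ℝ) : EReal) - Fconj g y.1
      ≤ ((∑ θ, x θ * y.1 θ : ℝ) : EReal) - (((∑ θ, y.1 θ * x θ : ℝ) : EReal) - g x) :=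
        EReal.sub_le_sub le_rfl h1
    _ = ((∑ θ, x θ * y.1 θ : ℝ) : EReal)
        - (((∑ θ, x θ * y.1 θ : ℝ) : EReal) - g x) := by rw [h2]
    _ ≤ g x := ereal_sub_sub_le _ _ (g_ne_bot hge x)

private lemma conj_ge (hconv : ConvexFnEReal g) (hlsc : LowerSemicontinuous g)
    (hmono : Monotone g) (h0 : g 0 = 0)
    (hge : ∀ x, ((∑ θ, x θ : ℝ) : EReal) ≤ g x) (x : Θ → ℝ) :
    g x ≤ conjOrthant (fun y => erealToENN (Fconj g y)) x := by
  classical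
  apply ereal_le_of_forall_real_lt
  intro r hr
  have hxr : (x, r) ∉ {p : (Θ → ℝ) × ℝ | g p.1 ≤ (p.2 : EReal)} := by
    simp only [Set.mem_setOf_eq]; exact not_le.2 hr
  obtain ⟨L, u, hLS, hLx⟩ :=
    geometric_hahn_banach_closed_point (epi_convex hconv) (epi_closed hlsc) hxr
  set β : ℝ := L ((0 : Θ → ℝ), (1 : ℝ)) with hβdef
  have hsplit : ∀ (w : Θ → ℝ) (t : ℝ), L (w, t) = L (w, (0 : ℝ)) + t * β := by
    intro w t
    have he : (w, t) = (w, (0 : ℝ)) + t • ((0 : Θ → ℝ), (1 : ℝ)) := by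
      rw [Prod.ext_iff]; constructor <;> simp
    rw [he, map_add, map_smul, smul_eq_mul]
  set cv : Θ → ℝ := fun θ => L ((fun j => if θ = j then (1 : ℝ) else 0), (0 : ℝ)) with hcv
  have hrep : ∀ w : Θ → ℝ, L (w, (0 : ℝ)) = ∑ θ, w θ * cv θ := by
    intro w
    have hw : (w, (0 : ℝ))
        = ∑ θ, w θ • (((fun j => if θ = j then (1 : ℝ) else 0) : Θ → ℝ), (0 : ℝ)) := by
      rw [Prod.ext_iff]
      constructor
      · simp only [Prod.fst_sum, Prod.smul_mk]
        exact pi_eq_sum_univ w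
      · simp only [Prod.snd_sum, Prod.smul_mk, smul_zero, Finset.sum_const_zero]
    rw [hw, map_sum]
    exact Finset.sum_congr rfl fun θ _ => by rw [map_smul, smul_eq_mul, hcv]
  have hLval : ∀ (w : Θ → ℝ) (t : ℝ), L (w, t) = ∑ θ, w θ * cv θ + t * β := fun w t => by
    rw [hsplit, hrep]
  have hβ : β ≤ 0 := by
    by_contra hbp
    push_neg at hbp
    have hmem : ((0 : Θ → ℝ), (|u| + 1) / β) ∈ {p : (Θ → ℝ) × ℝ | g p.1 ≤ (p.2 : EReal)} := by
      simp only [Set.mem_setOf_eq, h0]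
      exact_mod_cast div_nonneg (by positivity) hbp.le
    have h2 := hLS _ hmem
    rw [hLval] at h2
    simp only [Pi.zero_apply, zero_mul, Finset.sum_const_zero, zero_add] at h2
    rw [div_mul_cancel₀ _ (ne_of_gt hbp)] at h2
    have := le_abs_self u
    linarith
  have hu : u < ∑ θ, x θ * cv θ + r * β := by rw [← hLval]; exact hLx
  have hdomc : ∀ (w : Θ → ℝ) (s : ℝ), g w ≤ (s : EReal) → ∑ θ, w θ * cv θ + s * β < u := by
    intro w s hws
    have := hLS (w, s) (by simpa only [Set.mem_setOf_eq] using hws)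
    rwa [hLval] at this
  rcases lt_or_eq_of_le hβ with hβlt | hβ0
  · -- β < 0
    have hnb : 0 < -β := neg_pos.2 hβlt
    set z : Θ → ℝ := fun θ => cv θ / (-β) with hz
    have hFz : Fconj g z ≤ ((u / (-β) : ℝ) : EReal) := by
      refine iSup_le fun w => ?_
      by_cases hgw : g w = ⊤
      · rw [hgw, EReal.sub_top]; exact bot_le
      · have hgws : g w = ((g w).toReal : EReal) := (EReal.coe_toReal hgw (g_ne_bot hge w)).symm
        have hlt := hdomc w (g w).toReal (le_of_eq hgws)
        rw [hgws, ← EReal.coe_sub]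
        refine EReal.coe_le_coe_iff.2 ?_
        have hsum : ∑ θ, z θ * w θ = (∑ θ, w θ * cv θ) / (-β) := by
          rw [Finset.sum_div]
          exact Finset.sum_congr rfl fun θ _ => by rw [hz]; ring
        rw [hsum]
        have e1 : (∑ θ, w θ * cv θ) / (-β) - (g w).toReal
            = ((∑ θ, w θ * cv θ) + (g w).toReal * β) / (-β) := by
          rw [eq_div_iff hnb.ne', sub_mul, div_mul_cancel₀ _ hnb.ne']
          ring
        rw [e1]
        exact (div_le_div_iff_of_pos_right hnb).2 (le_of_lt hlt)
    have hzge : ∀ θ, 0 ≤ z θ := Fconj_nonneg_of_ne_top hmono h0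
      (fun htop => EReal.coe_ne_top _ (top_le_iff.1 (htop ▸ hFz)))
    refine le_trans ?_ (le_iSup (fun y : {y : Θ → ℝ // ∀ θ, 0 ≤ y θ} =>
      ((∑ θ, x θ * y.1 θ : ℝ) : EReal) - ((erealToENN (Fconj g y.1) : ℝ≥0∞) : EReal))
      ⟨z, hzge⟩)
    show (r : EReal) ≤ ((∑ θ, x θ * z θ : ℝ) : EReal) - ((erealToENN (Fconj g z) : ℝ≥0∞) : EReal)
    rw [coe_erealToENN (Fconj_nonneg h0 z)]
    have hr2 : r ≤ ∑ θ, x θ * z θ - u / (-β) := by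
      have hsum2 : ∑ θ, x θ * z θ = (∑ θ, x θ * cv θ) / (-β) := by
        rw [Finset.sum_div]
        exact Finset.sum_congr rfl fun θ _ => by rw [hz]; ring
      rw [hsum2, div_sub_div_same, le_div_iff₀ hnb]
      have e : r * (-β) = -(r * β) := by ring
      linarith
    calc (r : EReal) ≤ ((∑ θ, x θ * z θ - u / (-β) : ℝ) : EReal) := EReal.coe_le_coe_iff.2 hr2
      _ = ((∑ θ, x θ * z θ : ℝ) : EReal) - ((u / (-β) : ℝ) : EReal) := EReal.coe_sub _ _
      _ ≤ ((∑ θ, x θ * z θ : ℝ) : EReal) - Fconj g z := EReal.sub_le_sub le_rfl hFz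
  · -- β = 0
    have huA : u < ∑ θ, x θ * cv θ := by
      have h5 := hu
      rw [hβ0] at h5
      simpa using h5
    have hdom0 : ∀ (w : Θ → ℝ) (s : ℝ), g w ≤ (s : EReal) → ∑ θ, w θ * cv θ < u := by
      intro w s hws
      have h6 := hdomc w s hws
      rw [hβ0] at h6
      simpa using h6
    set A : ℝ := ∑ θ, x θ * cv θ with hA
    set B : ℝ := ∑ θ, x θ with hB
    set lam : ℝ := max 0 ((r - B + 1) / (A - u)) with hlam
    have hAu : 0 < A - u := by simp only [hA]; linarith
    have hlamnn : 0 ≤ lam := le_max_left _ _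
    have hlamval : r < B + lam * (A - u) := by
      rcases le_or_gt ((r - B + 1) / (A - u)) 0 with hc | hc
      · have hrB : r - B + 1 ≤ 0 := by
          by_contra hh
          push_neg at hh
          have := div_pos hh hAu
          linarith
        have hml : lam = 0 := max_eq_left hc
        rw [hml]
        simp only [zero_mul, add_zero]
        linarith
      · have hml : lam = (r - B + 1) / (A - u) := max_eq_right hc.le
        rw [hml, div_mul_cancel₀ _ (ne_of_gt hAu)]
        linarith
    set z : Θ → ℝ := fun θ => 1 + lam * cv θ with hz
    have hFz : Fconj g z ≤ ((lam * u : ℝ) : EReal) := by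
      refine iSup_le fun w => ?_
      by_cases hgw : g w = ⊤
      · rw [hgw, EReal.sub_top]; exact bot_le
      · have hgws : g w = ((g w).toReal : EReal) := (EReal.coe_toReal hgw (g_ne_bot hge w)).symm
        have hlt := hdom0 w (g w).toReal (le_of_eq hgws)
        have hBs : ∑ θ, w θ ≤ (g w).toReal := by
          have h7 := hge w
          rw [hgws] at h7
          exact_mod_cast h7
        rw [hgws, ← EReal.coe_sub]
        refine EReal.coe_le_coe_iff.2 ?_
        have hsum : ∑ θ, z θ * w θ = (∑ θ, w θ) + lam * ∑ θ, w θ * cv θ := by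
          rw [Finset.mul_sum, ← Finset.sum_add_distrib]
          exact Finset.sum_congr rfl fun θ _ => by rw [hz]; ring
        rw [hsum]
        have h8 := mul_le_mul_of_nonneg_left (le_of_lt hlt) hlamnn
        linarith
    have hzge : ∀ θ, 0 ≤ z θ := Fconj_nonneg_of_ne_top hmono h0
      (fun htop => EReal.coe_ne_top _ (top_le_iff.1 (htop ▸ hFz)))
    refine le_trans ?_ (le_iSup (fun y : {y : Θ → ℝ // ∀ θ, 0 ≤ y θ} =>
      ((∑ θ, x θ * y.1 θ : ℝ) : EReal) - ((erealToENN (Fconj g y.1) : ℝ≥0∞) : EReal))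
      ⟨z, hzge⟩)
    show (r : EReal) ≤ ((∑ θ, x θ * z θ : ℝ) : EReal) - ((erealToENN (Fconj g z) : ℝ≥0∞) : EReal)
    rw [coe_erealToENN (Fconj_nonneg h0 z)]
    have hr2 : r ≤ ∑ θ, x θ * z θ - lam * u := by
      have hsum2 : ∑ θ, x θ * z θ = B + lam * A := by
        rw [hB, hA, Finset.mul_sum, ← Finset.sum_add_distrib]
        exact Finset.sum_congr rfl fun θ _ => by rw [hz]; ring
      rw [hsum2]
      nlinarith [hlamval]
    calc (r : EReal) ≤ ((∑ θ, x θ * z θ - lam * u : ℝ) : EReal) := EReal.coe_le_coe_iff.2 hr2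
      _ = ((∑ θ, x θ * z θ : ℝ) : EReal) - ((lam * u : ℝ) : EReal) := EReal.coe_sub _ _
      _ ≤ ((∑ θ, x θ * z θ : ℝ) : EReal) - Fconj g z := EReal.sub_le_sub le_rfl hFz

private lemma f_convex (h0 : g 0 = 0) (hge : ∀ x, ((∑ θ, x θ : ℝ) : EReal) ≤ g x) :
    ConvexOnNonneg (fun y => erealToENN (Fconj g y)) := by
  intro y y' _ _ a b ha hb hab
  have key : Fconj g (fun i => a * y i + b * y' i)
      ≤ (a : EReal) * Fconj g y + (b : EReal) * Fconj g y' := by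
    refine iSup_le fun w => ?_
    have h1 : (∑ θ, (a * y θ + b * y' θ) * w θ : ℝ)
        = a * (∑ θ, y θ * w θ) + b * (∑ θ, y' θ * w θ) := by
      simp only [add_mul, mul_assoc, Finset.sum_add_distrib, Finset.mul_sum]
    rw [h1]
    calc ((a * (∑ θ, y θ * w θ) + b * (∑ θ, y' θ * w θ) : ℝ) : EReal) - g w
        ≤ (a : EReal) * (((∑ θ, y θ * w θ : ℝ) : EReal) - g w)
          + (b : EReal) * (((∑ θ, y' θ * w θ : ℝ) : EReal) - g w) :=
          ereal_comb_le a b _ _ hab _ (g_ne_bot hge w)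
      _ ≤ (a : EReal) * Fconj g y + (b : EReal) * Fconj g y' := by
          refine add_le_add ?_ ?_
          · exact mul_le_mul_of_nonneg_left
              (le_iSup (fun v : Θ → ℝ => ((∑ θ, y θ * v θ : ℝ) : EReal) - g v) w)
              (by exact_mod_cast ha)
          · exact mul_le_mul_of_nonneg_left
              (le_iSup (fun v : Θ → ℝ => ((∑ θ, y' θ * v θ : ℝ) : EReal) - g v) w)
              (by exact_mod_cast hb)
  rw [← EReal.coe_ennreal_le_coe_ennreal_iff, coe_erealToENN (Fconj_nonneg h0 _),
    EReal.coe_ennreal_add, EReal.coe_ennreal_mul, EReal.coe_ennreal_mul,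
    coe_erealToENN (Fconj_nonneg h0 _), coe_erealToENN (Fconj_nonneg h0 _),
    EReal.coe_ennreal_ofReal, EReal.coe_ennreal_ofReal]
  have hma : (max a 0 : ℝ) = a := max_eq_left ha
  have hmb : (max b 0 : ℝ) = b := max_eq_left hb
  rw [hma, hmb]
  exact key

private lemma f_lsc (h0 : g 0 = 0) :
    LowerSemicontinuousOn (fun y => erealToENN (Fconj g y)) {x : Θ → ℝ | ∀ θ, 0 ≤ x θ} := by
  intro y0 _ c hc
  have hc' : (c : EReal) < Fconj g y0 := by
    rw [← coe_erealToENN (Fconj_nonneg h0 y0)]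
    exact EReal.coe_ennreal_lt_coe_ennreal_iff.2 hc
  have hev := Fconj_lsc (g := g) y0 (c : EReal) hc'
  refine Filter.Eventually.filter_mono nhdsWithin_le_nhds ?_
  filter_upwards [hev] with y hy
  have : (c : EReal) < ((erealToENN (Fconj g y) : ℝ≥0∞) : EReal) := by
    rw [coe_erealToENN (Fconj_nonneg h0 y)]
    exact hy
  exact EReal.coe_ennreal_lt_coe_ennreal_iff.1 this

private lemma f_one (h0 : g 0 = 0) (hge : ∀ x, ((∑ θ, x θ : ℝ) : EReal) ≤ g x) :
    erealToENN (Fconj g (fun _ => 1)) = 0 := by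
  have h1 : Fconj g (fun _ => 1) = 0 := by
    apply le_antisymm
    · refine iSup_le fun w => ?_
      have h2 : (∑ θ, (fun _ => (1 : ℝ)) θ * w θ : ℝ) = ∑ θ, w θ := by simp
      rw [h2]
      exact ereal_sub_nonpos (hge w)
    · exact Fconj_nonneg h0 _
  rw [h1]
  simp [erealToENN]

end Backward

section Forward
variable {Θ : Type*} [Fintype Θ] (f : (Θ → ℝ) → ℝ≥0∞) (hf1 : f (fun _ => 1) = 0)

private noncomputable def oneV : {y : Θ → ℝ // ∀ θ, 0 ≤ y θ} :=
  ⟨fun _ => 1, fun _ => zero_le_one⟩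

include hf1

private lemma conj_zero : conjOrthant f 0 = 0 := by
  apply le_antisymm
  · refine iSup_le fun y => ?_
    have h1 : (∑ θ, (0 : Θ → ℝ) θ * y.1 θ : ℝ) = 0 := by simp
    rw [h1]
    exact ereal_sub_nonpos (EReal.coe_ennreal_nonneg (f y.1))
  · refine le_iSup_of_le (oneV (Θ := Θ)) ?_
    have h1 : (∑ θ, (0 : Θ → ℝ) θ * (oneV (Θ := Θ)).1 θ : ℝ) = 0 := by simp
    rw [h1, show (oneV (Θ := Θ)).1 = (fun _ => 1) from rfl, hf1]
    simp

private lemma conj_grad (x : Θ → ℝ) : ((∑ θ, x θ : ℝ) : EReal) ≤ conjOrthant f x := by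
  refine le_iSup_of_le (oneV (Θ := Θ)) ?_
  have h1 : (∑ θ, x θ * (oneV (Θ := Θ)).1 θ : ℝ) = ∑ θ, x θ := by
    simp [oneV]
  rw [h1, show (oneV (Θ := Θ)).1 = (fun _ => 1) from rfl, hf1]
  simp

omit hf1

private lemma conj_mono : Monotone (conjOrthant f) := by
  intro x x' hle
  refine iSup_mono fun y => ?_
  refine EReal.sub_le_sub (EReal.coe_le_coe_iff.2 ?_) le_rfl
  exact Finset.sum_le_sum fun θ _ => mul_le_mul_of_nonneg_right (hle θ) (y.2 θ)

private lemma conj_convex : ConvexFnEReal (conjOrthant f) := by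
  intro x x' a b ha hb hab
  refine iSup_le fun y => ?_
  have h1 : (∑ θ, (a • x + b • x') θ * y.1 θ : ℝ)
      = a * (∑ θ, x θ * y.1 θ) + b * (∑ θ, x' θ * y.1 θ) := by
    simp only [Pi.add_apply, Pi.smul_apply, smul_eq_mul, add_mul, mul_assoc,
      Finset.sum_add_distrib, Finset.mul_sum]
  rw [h1]
  calc ((a * (∑ θ, x θ * y.1 θ) + b * (∑ θ, x' θ * y.1 θ) : ℝ) : EReal) - (f y.1 : EReal)
      ≤ (a : EReal) * (((∑ θ, x θ * y.1 θ : ℝ) : EReal) - (f y.1 : EReal))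
        + (b : EReal) * (((∑ θ, x' θ * y.1 θ : ℝ) : EReal) - (f y.1 : EReal)) :=
        ereal_comb_le a b _ _ hab _ (EReal.coe_ennreal_ne_bot _)
    _ ≤ (a : EReal) * conjOrthant f x + (b : EReal) * conjOrthant f x' := by
        refine add_le_add ?_ ?_
        · exact mul_le_mul_of_nonneg_left
            (le_iSup (fun z : {y : Θ → ℝ // ∀ θ, 0 ≤ y θ} =>
              ((∑ θ, x θ * z.1 θ : ℝ) : EReal) - (f z.1 : EReal)) y) (by exact_mod_cast ha)
        · exact mul_le_mul_of_nonneg_left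
            (le_iSup (fun z : {y : Θ → ℝ // ∀ θ, 0 ≤ y θ} =>
              ((∑ θ, x' θ * z.1 θ : ℝ) : EReal) - (f z.1 : EReal)) y) (by exact_mod_cast hb)

private lemma conj_lsc : LowerSemicontinuous (conjOrthant f) := by
  apply lowerSemicontinuous_iSup
  intro y
  exact lsc_affine_sub y.1 (f y.1 : EReal)

end Forward

/-- `g : ℝ^Θ → (−∞,∞]` is the Fenchel conjugate of some convex, lower semicontinuous
`f : ℝ₊^Θ → [0,∞]` with `f(1,…,1) = 0` if and only if `g` is convex, lower semicontinuous,
monotone, vanishes at `0`, and the all-ones vector lies in the subdifferential of `g` at `0`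
(i.e. `g(0) + ⟨𝟙, x⟩ ≤ g(x)` for all `x`). -/
theorem stmt8 {Θ : Type*} [Fintype Θ] (g : (Θ → ℝ) → EReal) :
    (∃ f : (Θ → ℝ) → ℝ≥0∞, ConvexOnNonneg f ∧
        LowerSemicontinuousOn f {x | ∀ θ, 0 ≤ x θ} ∧ f (fun _ => 1) = 0 ∧
        ∀ x, g x = conjOrthant f x)
    ↔ (ConvexFnEReal g ∧ LowerSemicontinuous g ∧ Monotone g ∧ g 0 = 0 ∧
        ∀ x : Θ → ℝ, g 0 + ((∑ θ, x θ : ℝ) : EReal) ≤ g x) := by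
  constructor
  · rintro ⟨f, -, -, hf1, hg⟩
    have hg' : g = conjOrthant f := funext hg
    subst hg'
    refine ⟨conj_convex f, conj_lsc f, conj_mono f, conj_zero f hf1, ?_⟩
    intro x
    rw [conj_zero f hf1, zero_add]
    exact conj_grad f hf1 x
  · rintro ⟨hconv, hlsc, hmono, h0, hsub⟩
    have hge : ∀ x, ((∑ θ, x θ : ℝ) : EReal) ≤ g x := fun x => by
      have h := hsub x
      rwa [h0, zero_add] at h
    refine ⟨fun y => erealToENN (Fconj g y), f_convex h0 hge, f_lsc h0, f_one h0 hge, ?_⟩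
    intro x
    exact le_antisymm (conj_ge hconv hlsc hmono h0 hge x) (conj_le h0 hge x)
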